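/- For any f : Z_3^K → U₃ and g : Z_3^L → U₃: −Re E[f(x)g(y)g(z)] ≤ |f̂(0)|·((3/4)|ĝ(0)|² + (1/4)·Even(g)) + Dec(f,g). In particular the key combinatorial step: Σ_{α : π₃(α)=0} |ĝ(α)|²·(1/2)^{#α} ≤ (3/4)|ĝ(0)|² + (1/4)Even(g), using that no α with exactly one nonzero coordinate satisfies π₃(α) = 0. -/

import Mathlib

open Finset

noncomputable def ω : ℂ := Complex.exp (2 * Real.pi * Complex.I / 3)

lemma omega_pow_three : ω ^ 3 = 1 := by
  rw [ω, ← Complex.exp_nat_mul]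
  rw [show (3:ℕ) * (2 * Real.pi * Complex.I / 3) = 2 * Real.pi * Complex.I by push_cast; ring]
  exact Complex.exp_two_pi_mul_I

lemma omega_ne_one : ω ≠ 1 := by
  intro h
  rw [ω, Complex.exp_eq_one_iff] at h
  obtain ⟨n, hn⟩ := h
  have h2 : (2 * Real.pi * Complex.I) ≠ 0 := by
    simp [Complex.I_ne_zero, Real.pi_ne_zero, Complex.ofReal_ne_zero]
  have h3 : (n : ℂ) * 3 = 1 := by
    field_simp at hn
    have := mul_right_cancel₀ h2 (by linear_combination -(2 * Real.pi * Complex.I) * hn : (n:ℂ) * 3 * (2 * Real.pi * Complex.I) = 1 * (2 * Real.pi * Complex.I))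
    exact this
  have h4 : ((n * 3 : ℤ) : ℂ) = ((1:ℤ) : ℂ) := by push_cast; linear_combination h3
  have : (n * 3 : ℤ) = 1 := by exact_mod_cast h4
  omega

lemma omega_sum : 1 + ω + ω^2 = 0 := by
  have h : (ω - 1) * (1 + ω + ω^2) = 0 := by linear_combination omega_pow_three
  rcases mul_eq_zero.1 h with h1 | h2
  · exact absurd (by linear_combination h1 : ω = 1) omega_ne_one
  · exact h2

lemma omega_norm : ‖ω‖ = 1 := by
  rw [ω, show 2 * Real.pi * Complex.I / 3 = (2 * Real.pi / 3 : ℝ) * Complex.I by push_cast; ring]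
  exact Complex.norm_exp_ofReal_mul_I _

noncomputable def χ (a : ZMod 3) : ℂ := ω ^ a.val

lemma omega_pow_mod (n : ℕ) : ω ^ n = ω ^ (n % 3) := by
  conv_lhs => rw [← Nat.div_add_mod n 3]
  rw [pow_add, pow_mul, omega_pow_three, one_pow, one_mul]

lemma chi_natCast (n : ℕ) : χ (n : ZMod 3) = ω ^ n := by
  rw [χ, ZMod.val_natCast, ← omega_pow_mod]

lemma chi_zero : χ 0 = 1 := by simpa using chi_natCast 0

lemma chi_add (a b : ZMod 3) : χ (a + b) = χ a * χ b := by
  have h : ((a.val + b.val : ℕ) : ZMod 3) = a + b := by push_cast; simp [ZMod.natCast_val, ZMod.cast_id]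
  have : χ (a + b) = χ ((a.val + b.val : ℕ) : ZMod 3) := by rw [h]
  rw [this, chi_natCast, pow_add, χ, χ]

lemma omega_ne_zero : ω ≠ 0 := by
  intro h
  have := omega_norm
  rw [h] at this
  simp at this

lemma chi_conj (a : ZMod 3) : (starRingEnd ℂ) (χ a) = χ (-a) := by
  have h1 : (starRingEnd ℂ) ω = ω ^ 2 := by
    have hm : ω * (starRingEnd ℂ) ω = 1 := by
      rw [Complex.mul_conj, Complex.normSq_eq_norm_sq, omega_norm]
      norm_num
    have hm2 : ω * ω ^ 2 = 1 := by linear_combination omega_pow_three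
    exact mul_left_cancel₀ omega_ne_zero (hm.trans hm2.symm)
  rw [χ, map_pow, h1, ← pow_mul, mul_comm, ← chi_natCast]
  congr 1
  push_cast
  revert a; decide

lemma sum_zmod3 (h : ZMod 3 → ℂ) : ∑ a : ZMod 3, h a = h 0 + h 1 + h 2 := by
  rw [show (univ : Finset (ZMod 3)) = {0, 1, 2} from by decide]
  rw [Finset.sum_insert (by decide), Finset.sum_insert (by decide), Finset.sum_singleton]
  ring

lemma chi_sum : ∑ a : ZMod 3, χ a = 0 := by
  rw [sum_zmod3]
  rw [chi_zero, show (1 : ZMod 3) = ((1:ℕ) : ZMod 3) by norm_num, show (2 : ZMod 3) = ((2:ℕ) : ZMod 3) by norm_num, chi_natCast, chi_natCast]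
  simpa using omega_sum

lemma chi_sum_mul (c : ZMod 3) : ∑ a : ZMod 3, χ (c * a) = if c = 0 then 3 else 0 := by
  split_ifs with hc
  · subst hc; simp [chi_zero]
  · rw [← chi_sum]
    exact Fintype.sum_bijective (fun a => c * a) (Finite.injective_iff_bijective.1 (mul_right_injective₀ hc)) (fun a => χ (c * a)) χ (fun a => rfl)

/-- Fourier coefficient of `f : Z_3^ι → ℂ` at `α`: `E_x[f(x) · conj(ω^{α·x})]`. -/
noncomputable def fhat {ι : Type*} [Fintype ι] [DecidableEq ι] (f : (ι → ZMod 3) → ℂ)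
    (α : ι → ZMod 3) : ℂ :=
  (∑ x : ι → ZMod 3, f x * (starRingEnd ℂ) (ω ^ (∑ i, α i * x i).val)) /
    (Fintype.card (ι → ZMod 3) : ℂ)

lemma chi_finsum {ι : Type*} (s : Finset ι) (v : ι → ZMod 3) :
    χ (∑ i ∈ s, v i) = ∏ i ∈ s, χ (v i) := by
  induction s using Finset.cons_induction with
  | empty => simp [chi_zero]
  | cons a s ha ih => rw [Finset.sum_cons, Finset.prod_cons, chi_add, ih]

lemma sum_pi_prod {ι : Type*} [Fintype ι] [DecidableEq ι] (h : ι → ZMod 3 → ℂ) :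
    ∑ β : ι → ZMod 3, ∏ i, h i (β i) = ∏ i, ∑ b : ZMod 3, h i b := by
  rw [Finset.prod_univ_sum]
  rw [Fintype.piFinset_univ]

lemma orth {ι : Type*} [Fintype ι] [DecidableEq ι] (t : ι → ZMod 3) :
    ∑ β : ι → ZMod 3, χ (∑ i, β i * t i)
      = if t = 0 then (Fintype.card (ι → ZMod 3) : ℂ) else 0 := by
  have h1 : ∀ β : ι → ZMod 3, χ (∑ i, β i * t i) = ∏ i, χ (β i * t i) :=
    fun β => chi_finsum univ _
  simp only [h1]
  rw [sum_pi_prod (fun i b => χ (b * t i))]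
  have h2 : ∀ i, (∑ b : ZMod 3, χ (b * t i)) = if t i = 0 then 3 else 0 := by
    intro i
    rw [← chi_sum_mul (t i)]
    exact Finset.sum_congr rfl (fun b _ => by rw [mul_comm])
  simp only [h2]
  by_cases ht : t = 0
  · subst ht
    simp [Fintype.card_pi]
  · obtain ⟨i, hi⟩ : ∃ i, t i ≠ 0 := by
      by_contra hcon
      push_neg at hcon
      exact ht (funext hcon)
    rw [if_neg ht]
    exact Finset.prod_eq_zero (Finset.mem_univ i) (by rw [if_neg hi])

lemma card_ne_zero {ι : Type*} [Fintype ι] [DecidableEq ι] :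
    ((Fintype.card (ι → ZMod 3) : ℂ)) ≠ 0 := by
  simp [Fintype.card_pi]

lemma inversion {ι : Type*} [Fintype ι] [DecidableEq ι] (f : (ι → ZMod 3) → ℂ)
    (x : ι → ZMod 3) :
    ∑ β : ι → ZMod 3, fhat f β * χ (∑ i, β i * x i) = f x := by
  set N := (Fintype.card (ι → ZMod 3) : ℂ) with hN
  calc ∑ β : ι → ZMod 3, fhat f β * χ (∑ i, β i * x i)
      = ∑ β : ι → ZMod 3, (∑ x' : ι → ZMod 3, f x' * χ (∑ i, β i * (x i - x' i))) / N := by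
        refine Finset.sum_congr rfl fun β _ => ?_
        rw [fhat, div_mul_eq_mul_div]
        congr 1
        rw [Finset.sum_mul]
        refine Finset.sum_congr rfl fun x' _ => ?_
        have h0 : (ω ^ (∑ i, β i * x' i).val) = χ (∑ i, β i * x' i) := rfl
        rw [h0, chi_conj, mul_assoc, ← chi_add]
        congr 2
        rw [neg_add_eq_sub, ← Finset.sum_sub_distrib]
        exact Finset.sum_congr rfl fun i _ => (mul_sub _ _ _).symm
    _ = (∑ x' : ι → ZMod 3, f x' * ∑ β : ι → ZMod 3, χ (∑ i, β i * (x i - x' i))) / N := by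
        rw [← Finset.sum_div]
        congr 1
        rw [Finset.sum_comm]
        exact Finset.sum_congr rfl fun x' _ => (Finset.mul_sum _ _ _).symm
    _ = f x := by
        have h1 : ∀ x' : ι → ZMod 3,
            (∑ β : ι → ZMod 3, χ (∑ i, β i * (x i - x' i)))
              = if x' = x then N else 0 := by
          intro x'
          rw [orth (fun i => x i - x' i)]
          have h2 : ((fun i => x i - x' i) = 0) ↔ (x' = x) := by
            simp only [funext_iff, Pi.zero_apply, sub_eq_zero]
            exact ⟨fun h i => (h i).symm, fun h i => (h i).symm⟩
          simp only [h2]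
          rfl
        simp only [h1, mul_ite, mul_zero]
        rw [Finset.sum_ite_eq' univ x (fun x' => f x' * N), if_pos (Finset.mem_univ x)]
        exact mul_div_cancel_right₀ _ card_ne_zero

lemma Tlem (α γ a : ZMod 3) :
    ∑ u : ZMod 3, ∑ v : ZMod 3, (if u + v = 2*a then (0:ℂ) else 1/6) * (χ (α*u) * χ (γ*v))
    = if γ = α then (if α = 0 then 1 else -(1/2) * χ (2*a*α)) else 0 := by
  have split : ∀ u v : ZMod 3, (if u + v = 2*a then (0:ℂ) else 1/6) * (χ (α*u) * χ (γ*v))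
      = (1/6) * (χ (α*u) * χ (γ*v)) - (if v = 2*a - u then (1/6:ℂ) * (χ (α*u) * χ (γ*v)) else 0) := by
    intro u v
    by_cases h : u + v = 2*a
    · rw [if_pos h, if_pos (by rw [eq_sub_iff_add_eq, add_comm]; exact h)]; ring
    · rw [if_neg h, if_neg (fun hc => h (by rw [hc]; ring))]; ring
  simp only [split, Finset.sum_sub_distrib]
  have first : ∑ u : ZMod 3, ∑ v : ZMod 3, (1/6:ℂ) * (χ (α*u) * χ (γ*v))
      = (1/6) * ((if α = 0 then (3:ℂ) else 0) * (if γ = 0 then (3:ℂ) else 0)) := by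
    rw [← chi_sum_mul α, ← chi_sum_mul γ, Finset.sum_mul_sum, Finset.mul_sum]
    exact Finset.sum_congr rfl fun u _ => (Finset.mul_sum _ _ _).symm
  have second : ∀ u : ZMod 3, ∑ v : ZMod 3, (if v = 2*a - u then (1/6:ℂ) * (χ (α*u) * χ (γ*v)) else 0)
      = (1/6) * (χ (α*u) * χ (γ*(2*a - u))) := by
    intro u
    exact Finset.sum_ite_eq' univ (2*a-u) (fun v => (1/6:ℂ) * (χ (α*u) * χ (γ*v))) ▸ if_pos (Finset.mem_univ _)
  have third : ∑ u : ZMod 3, (1/6:ℂ) * (χ (α*u) * χ (γ*(2*a - u)))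
      = (1/6) * χ (2*a*γ) * (if α - γ = 0 then (3:ℂ) else 0) := by
    have e1 : ∀ u : ZMod 3, (1/6:ℂ) * (χ (α*u) * χ (γ*(2*a - u)))
        = (1/6) * χ (2*a*γ) * χ ((α - γ)*u) := by
      intro u
      have : γ*(2*a - u) = 2*a*γ + (-γ)*u := by ring
      rw [this, chi_add]
      have : (α - γ)*u = α*u + (-γ)*u := by ring
      rw [this, chi_add]
      ring
    simp only [e1]
    rw [← Finset.mul_sum, chi_sum_mul]
  simp only [second]
  rw [first, third]
  by_cases hga : γ = α
  · subst hga
    by_cases h0 : γ = 0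
    · subst h0
      norm_num [chi_zero]
    · rw [if_neg h0, if_neg h0, if_pos rfl, sub_self, if_pos rfl]
      ring
  · have h2 : ¬(α - γ = 0) := fun h => hga (by linear_combination -h)
    rw [if_neg hga, if_neg h2]
    by_cases h1 : α = 0
    · have h3 : ¬(γ = 0) := fun h => hga (h.trans h1.symm)
      rw [if_pos h1, if_neg h3]
      ring
    · rw [if_neg h1]
      ring

/-- The projection `π₃(α) ∈ Z_3^K`, whose `i`-th coordinate is the sum of block `i` of `α`. -/
def pi3 {K d : ℕ} (α : Fin K × Fin d → ZMod 3) : Fin K → ZMod 3 :=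
  fun i => ∑ j, α (i, j)

/-- `#α`: number of nonzero coordinates of `α`. -/
def nsupp {ι : Type*} [Fintype ι] (α : ι → ZMod 3) : ℕ :=
  (univ.filter (fun i => α i ≠ 0)).card

section A
variable {K d : ℕ}

lemma prodE (x : Fin K → ZMod 3) (α : Fin K × Fin d → ZMod 3) :
    ∏ p : Fin K × Fin d, (if α p = 0 then (1:ℂ) else -(1/2) * χ (2 * x p.1 * α p))
    = (-(1/2:ℂ)) ^ (nsupp α) * χ (∑ p : Fin K × Fin d, 2 * x p.1 * α p) := by
  have e1 : ∀ p : Fin K × Fin d, (if α p = 0 then (1:ℂ) else -(1/2) * χ (2 * x p.1 * α p))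
      = (if α p = 0 then (1:ℂ) else -(1/2)) * χ (2 * x p.1 * α p) := by
    intro p
    by_cases h : α p = 0
    · rw [if_pos h, if_pos h, h, mul_zero, chi_zero, mul_one]
    · rw [if_neg h, if_neg h]
  simp only [e1]
  rw [Finset.prod_mul_distrib, ← chi_finsum]
  congr 1
  rw [← Finset.prod_filter_mul_prod_filter_not univ (fun p => α p = 0)]
  rw [Finset.prod_congr rfl (fun p hp => if_pos (Finset.mem_filter.1 hp).2),
      Finset.prod_congr rfl (fun p hp => if_neg (Finset.mem_filter.1 hp).2),
      Finset.prod_const_one, one_mul, Finset.prod_const]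
  rfl

lemma sum_comm4 {A B C D : Type*} [Fintype A] [Fintype B] [Fintype C] [Fintype D]
    (F : A → B → C → D → ℂ) :
    ∑ a : A, ∑ b : B, ∑ c : C, ∑ e : D, F a b c e
      = ∑ c : C, ∑ e : D, ∑ a : A, ∑ b : B, F a b c e := by
  calc ∑ a : A, ∑ b : B, ∑ c : C, ∑ e : D, F a b c e
      = ∑ a : A, ∑ c : C, ∑ b : B, ∑ e : D, F a b c e :=
        Finset.sum_congr rfl fun a _ => Finset.sum_comm
    _ = ∑ c : C, ∑ a : A, ∑ b : B, ∑ e : D, F a b c e := Finset.sum_comm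
    _ = ∑ c : C, ∑ a : A, ∑ e : D, ∑ b : B, F a b c e :=
        Finset.sum_congr rfl fun c _ => Finset.sum_congr rfl fun a _ => Finset.sum_comm
    _ = ∑ c : C, ∑ e : D, ∑ a : A, ∑ b : B, F a b c e :=
        Finset.sum_congr rfl fun c _ => Finset.sum_comm

set_option maxHeartbeats 2000000 in
lemma lemmaA (g : (Fin K × Fin d → ZMod 3) → ℂ) (x : Fin K → ZMod 3) :
    ∑ y : Fin K × Fin d → ZMod 3, ∑ z : Fin K × Fin d → ZMod 3,
      (∏ p : Fin K × Fin d, (if y p + z p = 2 * x p.1 then (0:ℂ) else 1/6)) * g y * g z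
    = ∑ α : Fin K × Fin d → ZMod 3,
        (fhat g α)^2 * (-(1/2:ℂ)) ^ (nsupp α) * χ (∑ p : Fin K × Fin d, 2 * x p.1 * α p) := by
  set P : (Fin K × Fin d → ZMod 3) → (Fin K × Fin d → ZMod 3) → ℂ :=
    fun y z => ∏ p : Fin K × Fin d, (if y p + z p = 2 * x p.1 then (0:ℂ) else 1/6) with hP
  have step1 : ∀ y z : Fin K × Fin d → ZMod 3,
      P y z * g y * g z
      = ∑ γ : Fin K × Fin d → ZMod 3, ∑ α : Fin K × Fin d → ZMod 3,
          (fhat g α * fhat g γ) * (P y z * χ (∑ p, α p * y p) * χ (∑ p, γ p * z p)) := by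
    intro y z
    conv_lhs => rw [← inversion g y, ← inversion g z]
    rw [Finset.mul_sum]
    refine Finset.sum_congr rfl fun γ _ => ?_
    rw [Finset.mul_sum, Finset.sum_mul]
    refine Finset.sum_congr rfl fun α _ => ?_
    ring
  have kern : ∀ α γ : Fin K × Fin d → ZMod 3,
      ∑ y : Fin K × Fin d → ZMod 3, ∑ z : Fin K × Fin d → ZMod 3,
        P y z * χ (∑ p, α p * y p) * χ (∑ p, γ p * z p)
      = if γ = α then (-(1/2:ℂ)) ^ (nsupp α) * χ (∑ p : Fin K × Fin d, 2 * x p.1 * α p)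
        else 0 := by
    intro α γ
    have e1 : ∀ y z : Fin K × Fin d → ZMod 3,
        P y z * χ (∑ p, α p * y p) * χ (∑ p, γ p * z p)
        = ∏ p : Fin K × Fin d, ((if y p + z p = 2 * x p.1 then (0:ℂ) else 1/6)
            * (χ (α p * y p) * χ (γ p * z p))) := by
      intro y z
      rw [hP]
      simp only [chi_finsum univ]
      rw [← Finset.prod_mul_distrib, ← Finset.prod_mul_distrib]
      exact Finset.prod_congr rfl fun p _ => by ring
    simp only [e1]
    have e2 : ∀ y : Fin K × Fin d → ZMod 3,
        ∑ z : Fin K × Fin d → ZMod 3, ∏ p : Fin K × Fin d,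
          ((if y p + z p = 2 * x p.1 then (0:ℂ) else 1/6) * (χ (α p * y p) * χ (γ p * z p)))
        = ∏ p : Fin K × Fin d, ∑ v : ZMod 3,
            ((if y p + v = 2 * x p.1 then (0:ℂ) else 1/6) * (χ (α p * y p) * χ (γ p * v))) :=
      fun y => sum_pi_prod (fun p b =>
        (if y p + b = 2 * x p.1 then (0:ℂ) else 1/6) * (χ (α p * y p) * χ (γ p * b)))
    simp only [e2]
    rw [sum_pi_prod (fun p u => ∑ v : ZMod 3,
      ((if u + v = 2 * x p.1 then (0:ℂ) else 1/6) * (χ (α p * u) * χ (γ p * v))))]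
    have e3 : ∀ p : Fin K × Fin d,
        (∑ u : ZMod 3, ∑ v : ZMod 3,
          ((if u + v = 2 * x p.1 then (0:ℂ) else 1/6) * (χ (α p * u) * χ (γ p * v))))
        = if γ p = α p then (if α p = 0 then 1 else -(1/2) * χ (2 * x p.1 * α p)) else 0 :=
      fun p => Tlem (α p) (γ p) (x p.1)
    simp only [e3]
    by_cases hga : γ = α
    · subst hga
      simp only [if_pos rfl]
      exact prodE x γ ▸ rfl
    · obtain ⟨p, hp⟩ : ∃ p, γ p ≠ α p := by
        by_contra hcon
        push_neg at hcon
        exact hga (funext hcon)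
      rw [if_neg hga]
      exact Finset.prod_eq_zero (Finset.mem_univ p) (by rw [if_neg hp])
  calc ∑ y : Fin K × Fin d → ZMod 3, ∑ z : Fin K × Fin d → ZMod 3, P y z * g y * g z
      = ∑ y : Fin K × Fin d → ZMod 3, ∑ z : Fin K × Fin d → ZMod 3,
          ∑ γ : Fin K × Fin d → ZMod 3, ∑ α : Fin K × Fin d → ZMod 3,
          (fhat g α * fhat g γ) * (P y z * χ (∑ p, α p * y p) * χ (∑ p, γ p * z p)) :=
        Finset.sum_congr rfl fun y _ => Finset.sum_congr rfl fun z _ => step1 y z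
    _ = ∑ γ : Fin K × Fin d → ZMod 3, ∑ α : Fin K × Fin d → ZMod 3,
          ∑ y : Fin K × Fin d → ZMod 3, ∑ z : Fin K × Fin d → ZMod 3,
          (fhat g α * fhat g γ) * (P y z * χ (∑ p, α p * y p) * χ (∑ p, γ p * z p)) :=
        sum_comm4 _
    _ = ∑ γ : Fin K × Fin d → ZMod 3, ∑ α : Fin K × Fin d → ZMod 3,
          (fhat g α * fhat g γ) *
          (if γ = α then (-(1/2:ℂ)) ^ (nsupp α) * χ (∑ p : Fin K × Fin d, 2 * x p.1 * α p)
            else 0) := by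
        refine Finset.sum_congr rfl fun γ _ => Finset.sum_congr rfl fun α _ => ?_
        rw [← kern α γ, Finset.mul_sum]
        exact Finset.sum_congr rfl fun y _ => (Finset.mul_sum _ _ _).symm
    _ = ∑ γ : Fin K × Fin d → ZMod 3,
          (fhat g γ * fhat g γ) * ((-(1/2:ℂ)) ^ (nsupp γ) * χ (∑ p : Fin K × Fin d, 2 * x p.1 * γ p)) := by
        refine Finset.sum_congr rfl fun γ _ => ?_
        have hite : ∀ α : Fin K × Fin d → ZMod 3,
            (fhat g α * fhat g γ) *
              (if γ = α then (-(1/2:ℂ)) ^ (nsupp α) * χ (∑ p : Fin K × Fin d, 2 * x p.1 * α p)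
                else 0)
            = if γ = α then (fhat g α * fhat g γ) *
                ((-(1/2:ℂ)) ^ (nsupp α) * χ (∑ p : Fin K × Fin d, 2 * x p.1 * α p)) else 0 := by
          intro α
          split_ifs <;> simp
        simp only [hite]
        rw [Finset.sum_ite_eq univ γ (fun α => (fhat g α * fhat g γ) *
          ((-(1/2:ℂ)) ^ (nsupp α) * χ (∑ p : Fin K × Fin d, 2 * x p.1 * α p)))]
        rw [if_pos (Finset.mem_univ γ)]
    _ = ∑ α : Fin K × Fin d → ZMod 3,
        (fhat g α)^2 * (-(1/2:ℂ)) ^ (nsupp α) * χ (∑ p : Fin K × Fin d, 2 * x p.1 * α p) :=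
        Finset.sum_congr rfl fun γ _ => by ring

end A

/-- The test distribution's joint pmf: `x` uniform on `Z_3^K`, and independently per coordinate
`(i,j)`, `(y_{ij}, z_{ij})` uniform over the six pairs with `y_{ij} + z_{ij} ≠ 2·x_i`,
i.e. the pairs `(a,a+1),(a,a+2),(a+1,a),(a+1,a+1),(a+2,a),(a+2,a+2)` for `a = x_i`. -/
noncomputable def wt {K d : ℕ} (x : Fin K → ZMod 3) (y z : Fin K × Fin d → ZMod 3) : ℝ :=
  (1 / 3 ^ K) * ∏ p : Fin K × Fin d, (if y p + z p = 2 * x p.1 then (0 : ℝ) else 1/6)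

/-- `Even(g) = Σ_{|α| ≡ 0} |ĝ(α)|²`. -/
noncomputable def evenPart {ι : Type*} [Fintype ι] [DecidableEq ι]
    (g : (ι → ZMod 3) → ℂ) : ℝ :=
  ∑ α ∈ univ.filter (fun α : ι → ZMod 3 => (∑ i, α i) = 0), ‖fhat g α‖^2

section P1
variable {K d : ℕ} (hd : 1 ≤ d)

lemma pi3_zero : pi3 (0 : Fin K × Fin d → ZMod 3) = 0 := by
  funext i; simp [pi3]

lemma nsupp_zero : nsupp (0 : Fin K × Fin d → ZMod 3) = 0 := by
  simp [nsupp]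

lemma sum_eq_zero_of_pi3 {α : Fin K × Fin d → ZMod 3} (h : pi3 α = 0) :
    (∑ p : Fin K × Fin d, α p) = 0 := by
  rw [Fintype.sum_prod_type]
  have : ∀ i : Fin K, (∑ j : Fin d, α (i, j)) = 0 := fun i => congrFun h i
  simp [this]

lemma two_le_nsupp {α : Fin K × Fin d → ZMod 3} (h : pi3 α = 0) (hne : α ≠ 0) :
    2 ≤ nsupp α := by
  obtain ⟨p₀, hp₀⟩ : ∃ p, α p ≠ 0 := by
    by_contra hcon
    push_neg at hcon
    exact hne (funext hcon)
  by_contra hlt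
  push_neg at hlt
  -- nsupp α ≤ 1, and p₀ is in the support, so support = {p₀}
  have hmem : p₀ ∈ univ.filter (fun p => α p ≠ 0) := Finset.mem_filter.2 ⟨Finset.mem_univ _, hp₀⟩
  have honly : ∀ p, p ≠ p₀ → α p = 0 := by
    intro p hp
    by_contra hap
    have hmem2 : p ∈ univ.filter (fun q => α q ≠ 0) := Finset.mem_filter.2 ⟨Finset.mem_univ _, hap⟩
    have : 2 ≤ (univ.filter (fun q => α q ≠ 0)).card :=
      Finset.one_lt_card.2 ⟨p, hmem2, p₀, hmem, hp⟩
    rw [nsupp] at hlt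
    omega
  have hval : pi3 α p₀.1 = α p₀ := by
    rw [pi3]
    rw [Finset.sum_eq_single p₀.2]
    · intro j _ hj
      exact honly (p₀.1, j) (by simp [Prod.ext_iff, hj])
    · intro hj
      exact absurd (Finset.mem_univ _) hj
  rw [congrFun h p₀.1] at hval
  exact hp₀ hval.symm

lemma part1 (g : (Fin K × Fin d → ZMod 3) → ℂ) :
    ∑ α ∈ univ.filter (fun α : Fin K × Fin d → ZMod 3 => pi3 α = 0),
        ‖fhat g α‖^2 * (1/2 : ℝ) ^ nsupp α
      ≤ (3/4) * ‖fhat g 0‖^2 + (1/4) * evenPart g := by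
  set A := univ.filter (fun α : Fin K × Fin d → ZMod 3 => pi3 α = 0) with hA
  set E := univ.filter (fun α : Fin K × Fin d → ZMod 3 => (∑ p, α p) = 0) with hE
  have h0A : (0 : Fin K × Fin d → ZMod 3) ∈ A :=
    Finset.mem_filter.2 ⟨Finset.mem_univ _, pi3_zero⟩
  have h0E : (0 : Fin K × Fin d → ZMod 3) ∈ E :=
    Finset.mem_filter.2 ⟨Finset.mem_univ _, by simp⟩
  rw [← Finset.add_sum_erase A _ h0A]
  have hz : ‖fhat g 0‖^2 * (1/2 : ℝ) ^ nsupp (0 : Fin K × Fin d → ZMod 3) = ‖fhat g 0‖^2 := by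
    rw [nsupp_zero]; simp
  rw [hz]
  have hb1 : ∑ α ∈ A.erase 0, ‖fhat g α‖^2 * (1/2 : ℝ) ^ nsupp α
      ≤ ∑ α ∈ A.erase 0, (1/4) * ‖fhat g α‖^2 := by
    refine Finset.sum_le_sum fun α hα => ?_
    have hαA := Finset.mem_of_mem_erase hα
    have hne : α ≠ 0 := Finset.ne_of_mem_erase hα
    have hpi : pi3 α = 0 := (Finset.mem_filter.1 hαA).2
    have h2 : 2 ≤ nsupp α := two_le_nsupp hpi hne
    have hp : (1/2 : ℝ) ^ nsupp α ≤ (1/2 : ℝ)^2 :=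
      pow_le_pow_of_le_one (by norm_num) (by norm_num) h2
    calc ‖fhat g α‖^2 * (1/2 : ℝ) ^ nsupp α ≤ ‖fhat g α‖^2 * (1/2:ℝ)^2 :=
          mul_le_mul_of_nonneg_left hp (sq_nonneg _)
      _ = (1/4) * ‖fhat g α‖^2 := by ring
  have hb2 : ∑ α ∈ A.erase 0, (1/4:ℝ) * ‖fhat g α‖^2
      ≤ ∑ α ∈ E.erase 0, (1/4:ℝ) * ‖fhat g α‖^2 := by
    refine Finset.sum_le_sum_of_subset_of_nonneg ?_ (fun α _ _ => by positivity)
    intro α hα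
    refine Finset.mem_erase.2 ⟨Finset.ne_of_mem_erase hα, ?_⟩
    refine Finset.mem_filter.2 ⟨Finset.mem_univ _, ?_⟩
    exact sum_eq_zero_of_pi3 (Finset.mem_filter.1 (Finset.mem_of_mem_erase hα)).2
  have hb3 : ∑ α ∈ E.erase 0, (1/4:ℝ) * ‖fhat g α‖^2
      = (1/4) * (evenPart g - ‖fhat g 0‖^2) := by
    rw [← Finset.mul_sum, Finset.sum_erase_eq_sub h0E]
    rfl
  have hnn : (0:ℝ) ≤ ‖fhat g 0‖^2 := sq_nonneg _
  have hle : evenPart g - ‖fhat g 0‖^2 ≥ 0 := by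
    have : ‖fhat g 0‖^2 ≤ evenPart g := Finset.single_le_sum (f := fun α => ‖fhat g α‖^2)
      (fun α _ => sq_nonneg _) h0E
    linarith
  linarith [hb1, hb2, hb3.le, hb3.ge]

end P1

section M
variable {K d : ℕ}

lemma fhat_pi3 (f : (Fin K → ZMod 3) → ℂ) (α : Fin K × Fin d → ZMod 3) :
    fhat f (pi3 α)
      = (∑ x : Fin K → ZMod 3, f x * χ (∑ p : Fin K × Fin d, 2 * x p.1 * α p)) / (3^K : ℂ) := by
  rw [fhat]
  have hcard : (Fintype.card (Fin K → ZMod 3) : ℂ) = (3:ℂ)^K := by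
    simp [Fintype.card_fun]
  rw [hcard]
  congr 1
  refine Finset.sum_congr rfl fun x _ => ?_
  have h1 : (ω ^ (∑ i, pi3 α i * x i).val) = χ (∑ i, pi3 α i * x i) := rfl
  rw [h1, chi_conj]
  congr 2
  have key2 : ∀ s t : ZMod 3, -(2 * t * s) = s * t := by decide
  rw [Fintype.sum_prod_type, neg_eq_iff_eq_neg, ← Finset.sum_neg_distrib]
  refine Finset.sum_congr rfl fun i _ => ?_
  rw [pi3, Finset.sum_mul, ← Finset.sum_neg_distrib]
  refine Finset.sum_congr rfl fun j _ => ?_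
  exact (key2 (α (i, j)) (x i)).symm

lemma mainId (f : (Fin K → ZMod 3) → ℂ) (g : (Fin K × Fin d → ZMod 3) → ℂ) :
    ∑ x : Fin K → ZMod 3, ∑ y : Fin K × Fin d → ZMod 3, ∑ z : Fin K × Fin d → ZMod 3,
        (wt x y z : ℂ) * f x * g y * g z
    = ∑ α : Fin K × Fin d → ZMod 3,
        fhat f (pi3 α) * ((fhat g α)^2 * (-(1/2:ℂ)) ^ (nsupp α)) := by
  have hcast : ∀ (x : Fin K → ZMod 3) (y z : Fin K × Fin d → ZMod 3),
      ((wt x y z : ℝ) : ℂ) = (1/(3:ℂ)^K) *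
        ∏ p : Fin K × Fin d, (if y p + z p = 2 * x p.1 then (0:ℂ) else 1/6) := by
    intro x y z
    rw [wt]
    push_cast [apply_ite (Complex.ofReal)]
    rfl
  have step1 : ∀ x : Fin K → ZMod 3,
      ∑ y : Fin K × Fin d → ZMod 3, ∑ z : Fin K × Fin d → ZMod 3,
        (wt x y z : ℂ) * f x * g y * g z
      = (1/(3:ℂ)^K) * f x *
          ∑ y : Fin K × Fin d → ZMod 3, ∑ z : Fin K × Fin d → ZMod 3,
            (∏ p : Fin K × Fin d, (if y p + z p = 2 * x p.1 then (0:ℂ) else 1/6)) * g y * g z := by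
    intro x
    rw [Finset.mul_sum]
    refine Finset.sum_congr rfl fun y _ => ?_
    rw [Finset.mul_sum]
    refine Finset.sum_congr rfl fun z _ => ?_
    rw [hcast]
    ring
  simp only [step1, lemmaA]
  have step2 : ∀ x : Fin K → ZMod 3,
      (1/(3:ℂ)^K) * f x * (∑ α : Fin K × Fin d → ZMod 3,
        fhat g α ^ 2 * (-(1/2:ℂ)) ^ nsupp α * χ (∑ p : Fin K × Fin d, 2 * x p.1 * α p))
      = ∑ α : Fin K × Fin d → ZMod 3, (1/(3:ℂ)^K) * f x *
          (fhat g α ^ 2 * (-(1/2:ℂ)) ^ nsupp α * χ (∑ p : Fin K × Fin d, 2 * x p.1 * α p)) :=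
    fun x => Finset.mul_sum _ _ _
  simp only [step2]
  rw [Finset.sum_comm]
  refine Finset.sum_congr rfl fun α _ => ?_
  rw [fhat_pi3 f α, div_mul_eq_mul_div, Finset.sum_mul, Finset.sum_div]
  exact Finset.sum_congr rfl fun x _ => by ring

theorem part2 (f : (Fin K → ZMod 3) → ℂ) (g : (Fin K × Fin d → ZMod 3) → ℂ) :
    -(∑ x : Fin K → ZMod 3, ∑ y : Fin K × Fin d → ZMod 3, ∑ z : Fin K × Fin d → ZMod 3,
        (wt x y z : ℂ) * f x * g y * g z).re
      ≤ ‖fhat f 0‖ * ((3/4) * ‖fhat g 0‖^2 + (1/4) * evenPart g)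
        + ∑ α ∈ univ.filter (fun α : Fin K × Fin d → ZMod 3 => pi3 α ≠ 0),
            ‖fhat f (pi3 α)‖ * ‖fhat g α‖^2 * (1/2 : ℝ) ^ nsupp α := by
  rw [mainId f g, Complex.re_sum, ← Finset.sum_neg_distrib]
  have hhalf : ‖(-(1/2) : ℂ)‖ = 1/2 := by
    rw [norm_neg]
    norm_num
  have hb : ∀ α : Fin K × Fin d → ZMod 3,
      -(fhat f (pi3 α) * (fhat g α ^ 2 * (-(1/2:ℂ)) ^ nsupp α)).re
        ≤ ‖fhat f (pi3 α)‖ * ‖fhat g α‖^2 * (1/2 : ℝ) ^ nsupp α := by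
    intro α
    set w := fhat f (pi3 α) * (fhat g α ^ 2 * (-(1/2:ℂ)) ^ nsupp α) with hw
    have h1 : -w.re ≤ ‖w‖ := by
      have h2 := Complex.abs_re_le_norm w
      cases abs_le.1 (le_of_eq rfl : |w.re| ≤ |w.re|) with
      | _ => linarith [abs_le.1 (le_refl |w.re|), neg_abs_le w.re, h2]
    refine h1.trans (le_of_eq ?_)
    rw [hw, norm_mul, norm_mul, norm_pow, norm_pow, hhalf]
    ring
  refine (Finset.sum_le_sum fun α _ => hb α).trans ?_
  rw [← Finset.sum_filter_add_sum_filter_not univ (fun α : Fin K × Fin d → ZMod 3 => pi3 α = 0)]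
  have hfirst : ∑ α ∈ univ.filter (fun α : Fin K × Fin d → ZMod 3 => pi3 α = 0),
      ‖fhat f (pi3 α)‖ * ‖fhat g α‖^2 * (1/2 : ℝ) ^ nsupp α
      = ‖fhat f 0‖ * ∑ α ∈ univ.filter (fun α : Fin K × Fin d → ZMod 3 => pi3 α = 0),
          ‖fhat g α‖^2 * (1/2 : ℝ) ^ nsupp α := by
    rw [Finset.mul_sum]
    refine Finset.sum_congr rfl fun α hα => ?_
    rw [(Finset.mem_filter.1 hα).2]
    ring
  rw [hfirst]
  have hsecond : ∑ α ∈ univ.filter (fun α : Fin K × Fin d → ZMod 3 => ¬pi3 α = 0),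
      ‖fhat f (pi3 α)‖ * ‖fhat g α‖^2 * (1/2 : ℝ) ^ nsupp α
      = ∑ α ∈ univ.filter (fun α : Fin K × Fin d → ZMod 3 => pi3 α ≠ 0),
      ‖fhat f (pi3 α)‖ * ‖fhat g α‖^2 * (1/2 : ℝ) ^ nsupp α := rfl
  rw [hsecond]
  exact add_le_add_left (mul_le_mul_of_nonneg_left (part1 g) (norm_nonneg _)) _

end M

/-- Key combinatorial step and the resulting bound:
`Σ_{π₃(α)=0}|ĝ(α)|²(1/2)^{#α} ≤ (3/4)|ĝ(0)|² + (1/4)Even(g)` and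
`−Re E[f(x)g(y)g(z)] ≤ |f̂(0)|·((3/4)|ĝ(0)|² + (1/4)Even(g)) + Dec(f,g)`. -/
theorem stmt15 (K d : ℕ) (hK : 0 < K) (hd : 1 ≤ d)
    (f : (Fin K → ZMod 3) → ℂ) (g : (Fin K × Fin d → ZMod 3) → ℂ)
    (hfU : ∀ x, f x ∈ ({1, ω, ω^2} : Set ℂ)) (hgU : ∀ y, g y ∈ ({1, ω, ω^2} : Set ℂ)) :
    (∑ α ∈ univ.filter (fun α : Fin K × Fin d → ZMod 3 => pi3 α = 0),
        ‖fhat g α‖^2 * (1/2 : ℝ) ^ nsupp α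
      ≤ (3/4) * ‖fhat g 0‖^2 + (1/4) * evenPart g) ∧
    -(∑ x : Fin K → ZMod 3, ∑ y : Fin K × Fin d → ZMod 3, ∑ z : Fin K × Fin d → ZMod 3,
        (wt x y z : ℂ) * f x * g y * g z).re
      ≤ ‖fhat f 0‖ * ((3/4) * ‖fhat g 0‖^2 + (1/4) * evenPart g)
        + ∑ α ∈ univ.filter (fun α : Fin K × Fin d → ZMod 3 => pi3 α ≠ 0),
            ‖fhat f (pi3 α)‖ * ‖fhat g α‖^2 * (1/2 : ℝ) ^ nsupp α :=
  ⟨part1 g, part2 f g⟩
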